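/- For $M=2$ and $N=1$ with $\mathcal N=(-1,1)$, suppose $\hat Y^{\epsilon_1}$ and $\hat Y^{\epsilon_2}$ solve $\partial_t\hat Y(x,t)=\int_{x-1}^{x+1}\operatorname{sign}\hat Y(x',t)dx'$ on an interval with initial data satisfying $\hat Y^{\epsilon_1}(x,0)\ge\hat Y^{\epsilon_2}(x,0)+(\epsilon_1-\epsilon_2)$ for all $x$, where $\epsilon_1>\epsilon_2$. Then for each $x$, the function $t\mapsto\hat Y^{\epsilon_1}(x,t)-\hat Y^{\epsilon_2}(x,t)$ is nondecreasing in $t$; in particular $\hat Y^{\epsilon_1}(x,t)\ge\hat Y^{\epsilon_2}(x,t)+(\epsilon_1-\epsilon_2)$ for all $t\ge 0$. -/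

import Mathlib

open MeasureTheory Set

lemma mySign_measurable : Measurable Real.sign := by
  have : Real.sign = fun r : ℝ => if r < 0 then (-1 : ℝ) else if 0 < r then 1 else 0 := by
    funext r; rfl
  rw [this]
  exact Measurable.ite (measurableSet_lt measurable_id measurable_const) measurable_const
    (Measurable.ite (measurableSet_lt measurable_const measurable_id) measurable_const measurable_const)

lemma mySign_mono : Monotone Real.sign := by
  intro a b hab
  rcases lt_trichotomy a 0 with ha | ha | ha
  · rw [Real.sign_of_neg ha]
    rcases Real.sign_apply_eq b with h | h | h <;> rw [h] <;> norm_num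
  · subst ha; rw [Real.sign_zero]
    rcases hab.lt_or_eq with h | h
    · rw [Real.sign_of_pos h]; norm_num
    · rw [← h, Real.sign_zero]
  · rw [Real.sign_of_pos ha, Real.sign_of_pos (ha.trans_le hab)]

lemma mySign_abs_le (r : ℝ) : ‖Real.sign r‖ ≤ 1 := by
  rcases Real.sign_apply_eq r with h | h | h <;> rw [h] <;> norm_num

lemma myIntegrable (Y : ℝ → ℝ → ℝ) (hc : Continuous fun p : ℝ × ℝ => Y p.1 p.2)
    (x t : ℝ) :
    IntegrableOn (fun x' => Real.sign (Y x' t)) (Set.Ioo (x - 1) (x + 1)) := by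
  have hmeas : Measurable fun x' => Real.sign (Y x' t) :=
    mySign_measurable.comp (hc.comp (continuous_id.prodMk continuous_const)).measurable
  have hfin : volume (Set.Ioo (x - 1) (x + 1)) < ⊤ := by
    rw [Real.volume_Ioo]; exact ENNReal.ofReal_lt_top
  haveI : IsFiniteMeasure (volume.restrict (Set.Ioo (x - 1) (x + 1))) :=
    ⟨by rwa [Measure.restrict_apply_univ]⟩
  refine ⟨hmeas.aestronglyMeasurable, ?_⟩
  exact MeasureTheory.HasFiniteIntegral.of_bounded (C := 1)
    (Filter.Eventually.of_forall fun x' => mySign_abs_le _)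

lemma myBound (Y : ℝ → ℝ → ℝ) (hc : Continuous fun p : ℝ × ℝ => Y p.1 p.2) (x t : ℝ) :
    ‖∫ x' in Set.Ioo (x - 1) (x + 1), Real.sign (Y x' t)‖ ≤ 2 := by
  have hfin : volume (Set.Ioo (x - 1) (x + 1)) < ⊤ := by
    rw [Real.volume_Ioo]; exact ENNReal.ofReal_lt_top
  have := norm_setIntegral_le_of_norm_le_const (C := 1) hfin
    (fun x' _ => mySign_abs_le (Y x' t))
  · calc ‖∫ x' in Set.Ioo (x - 1) (x + 1), Real.sign (Y x' t)‖
        ≤ 1 * (volume (Set.Ioo (x - 1) (x + 1))).toReal := this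
      _ = 2 := by rw [one_mul, Real.volume_Ioo, ENNReal.toReal_ofReal (by linarith)]; ring

/-- Monotonicity (comparison principle) for the `M = 2` continuum Schelling evolution
`∂ₜ Ŷ(x,t) = ∫_{x-1}^{x+1} sign Ŷ(x',t) dx'`: if `Ŷ^{ε₁}(·,0) ≥ Ŷ^{ε₂}(·,0) + (ε₁ - ε₂)`
then `t ↦ Ŷ^{ε₁}(x,t) - Ŷ^{ε₂}(x,t)` is nondecreasing, and in particular the ordering with
gap `ε₁ - ε₂` persists for all `t ≥ 0`. -/
theorem stmt17 (ε1 ε2 : ℝ) (hε : ε2 < ε1)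
    (Y1 Y2 : ℝ → ℝ → ℝ)
    (hc1 : Continuous fun p : ℝ × ℝ => Y1 p.1 p.2)
    (hc2 : Continuous fun p : ℝ × ℝ => Y2 p.1 p.2)
    (hPDE1 : ∀ x t : ℝ, 0 ≤ t →
      HasDerivAt (fun s => Y1 x s)
        (∫ x' in Set.Ioo (x - 1) (x + 1), Real.sign (Y1 x' t)) t)
    (hPDE2 : ∀ x t : ℝ, 0 ≤ t →
      HasDerivAt (fun s => Y2 x s)
        (∫ x' in Set.Ioo (x - 1) (x + 1), Real.sign (Y2 x' t)) t)
    (hinit : ∀ x : ℝ, Y2 x 0 + (ε1 - ε2) ≤ Y1 x 0) :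
    (∀ x s t : ℝ, 0 ≤ s → s ≤ t →
      Y1 x s - Y2 x s ≤ Y1 x t - Y2 x t) ∧
    (∀ x t : ℝ, 0 ≤ t → Y2 x t + (ε1 - ε2) ≤ Y1 x t) := by
  have hδ : 0 < ε1 - ε2 := sub_pos.mpr hε
  have hcf : ∀ x : ℝ, Continuous fun s => Y1 x s - Y2 x s := fun x =>
    (hc1.comp (Continuous.prodMk_right x)).sub (hc2.comp (Continuous.prodMk_right x))
  have hder : ∀ x t : ℝ, 0 ≤ t → HasDerivAt (fun s => Y1 x s - Y2 x s)
      ((∫ x' in Set.Ioo (x - 1) (x + 1), Real.sign (Y1 x' t)) -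
        ∫ x' in Set.Ioo (x - 1) (x + 1), Real.sign (Y2 x' t)) t :=
    fun x t ht => (hPDE1 x t ht).sub (hPDE2 x t ht)
  -- derivative is nonnegative whenever the weak ordering holds at time t
  have hdnn : ∀ t : ℝ, (∀ x', Y2 x' t ≤ Y1 x' t) → ∀ x : ℝ,
      0 ≤ (∫ x' in Set.Ioo (x - 1) (x + 1), Real.sign (Y1 x' t)) -
        ∫ x' in Set.Ioo (x - 1) (x + 1), Real.sign (Y2 x' t) := fun t hord x =>
    sub_nonneg.mpr (setIntegral_mono_on (myIntegrable Y2 hc2 x t)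
      (myIntegrable Y1 hc1 x t) measurableSet_Ioo (fun x' _ => mySign_mono (hord x')))
  -- the difference is 4-Lipschitz on [0,∞)
  have hlip : ∀ x : ℝ, ∀ a ∈ Ici (0:ℝ), ∀ b ∈ Ici (0:ℝ),
      ‖(Y1 x b - Y2 x b) - (Y1 x a - Y2 x a)‖ ≤ 4 * ‖b - a‖ := by
    intro x a ha b hb
    refine Convex.norm_image_sub_le_of_norm_hasDerivWithin_le
      (f' := fun t => (∫ x' in Set.Ioo (x - 1) (x + 1), Real.sign (Y1 x' t)) -
        ∫ x' in Set.Ioo (x - 1) (x + 1), Real.sign (Y2 x' t))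
      (fun t ht => (hder x t ht).hasDerivWithinAt) ?_ (convex_Ici 0) ha hb
    intro t _
    calc ‖(∫ x' in Set.Ioo (x - 1) (x + 1), Real.sign (Y1 x' t)) -
        ∫ x' in Set.Ioo (x - 1) (x + 1), Real.sign (Y2 x' t)‖
        ≤ ‖∫ x' in Set.Ioo (x - 1) (x + 1), Real.sign (Y1 x' t)‖ +
          ‖∫ x' in Set.Ioo (x - 1) (x + 1), Real.sign (Y2 x' t)‖ := norm_sub_le _ _
      _ ≤ 2 + 2 := add_le_add (myBound Y1 hc1 x t) (myBound Y2 hc2 x t)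
      _ = 4 := by norm_num
  set h : ℝ := (ε1 - ε2) / 8 with hhdef
  have hh : 0 < h := by positivity
  have key : ∀ n : ℕ, ∀ t : ℝ, 0 ≤ t → t ≤ n * h → ∀ x, Y2 x t + (ε1 - ε2) ≤ Y1 x t := by
    intro n
    induction n with
    | zero =>
      intro t ht ht' x
      have : t = 0 := le_antisymm (by simpa using ht') ht
      rw [this]; exact hinit x
    | succ n ih =>
      intro t ht ht' x
      by_cases hcase : t ≤ n * h
      · exact ih t ht hcase x
      push_neg at hcase
      have hnh : (0:ℝ) ≤ n * h := by positivity
      have hnh1 : (n : ℝ) * h < (n + 1) * h := by nlinarith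
      have ht1 : t ≤ (n + 1) * h := by push_cast at ht' ⊢; linarith
      -- weak ordering on [n*h, (n+1)*h]
      have hpos : ∀ s : ℝ, n * h ≤ s → s ≤ (n + 1) * h → ∀ x', Y2 x' s ≤ Y1 x' s := by
        intro s hs1 hs2 x'
        have h0 := ih (n * h) hnh le_rfl x'
        have hl := hlip x' (n * h) hnh s (le_trans hnh hs1)
        rw [Real.norm_eq_abs, Real.norm_eq_abs, abs_of_nonneg (by linarith : (0:ℝ) ≤ s - n * h)]
          at hl
        have habs := abs_le.mp hl
        have hsub : s - n * h ≤ h := by linarith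
        have : (ε1 - ε2) - 4 * h ≤ Y1 x' s - Y2 x' s := by
          have := habs.1
          nlinarith
        have : 0 < Y1 x' s - Y2 x' s := by
          rw [hhdef] at this; linarith
        linarith
      have hmono : MonotoneOn (fun s => Y1 x s - Y2 x s) (Icc (n * h) ((n + 1) * h)) := by
        apply monotoneOn_of_deriv_nonneg (convex_Icc _ _) (hcf x).continuousOn
        · rw [interior_Icc]
          intro s hs
          exact ((hder x s (le_trans hnh hs.1.le)).differentiableAt).differentiableWithinAt
        · rw [interior_Icc]
          intro s hs
          have hs0 : 0 ≤ s := le_trans hnh hs.1.le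
          rw [(hder x s hs0).deriv]
          exact hdnn s (hpos s hs.1.le hs.2.le) x
      have hle := hmono ⟨le_rfl, hnh1.le⟩ ⟨hcase.le, ht1⟩ hcase.le
      have h0 := ih (n * h) hnh le_rfl x
      simp only at hle
      linarith
  have part2 : ∀ x t : ℝ, 0 ≤ t → Y2 x t + (ε1 - ε2) ≤ Y1 x t := by
    intro x t ht
    obtain ⟨n, hn⟩ := exists_nat_gt (t / h)
    refine key n t ht ?_ x
    rw [div_lt_iff₀ hh] at hn
    linarith
  refine ⟨?_, part2⟩
  intro x s t hs hst
  have hmono : MonotoneOn (fun u => Y1 x u - Y2 x u) (Ici 0) := by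
    apply monotoneOn_of_deriv_nonneg (convex_Ici 0) (hcf x).continuousOn
    · rw [interior_Ici]
      intro u hu
      exact ((hder x u hu.le).differentiableAt).differentiableWithinAt
    · rw [interior_Ici]
      intro u hu
      rw [(hder x u hu.le).deriv]
      exact hdnn u (fun x' => by have := part2 x' u hu.le; linarith) x
  exact hmono hs (hs.trans hst) hst
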